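/- Let k and δ be positive integers with k < √(ln δ), and let G be a connected graph on n vertices with minimum degree at least δ. Then rx_k(G) ≤ n·(ln δ/δ)·(1 + o_δ(1)); concretely, rx_k(G) ≤ γ_k^c(G) + k - 1 where γ_k^c(G) ≤ n·(ln δ/δ)·(1 + o_δ(1)). -/

import Mathlib

open SimpleGraph Filter

/-- An edge-coloring `c` is a `k`-rainbow coloring of `G` if every set of `k` vertices
is connected by a rainbow tree (here: a connected subgraph whose edges receive
pairwise distinct colors). -/
def IsKRainbowColoring {V : Type*} (G : SimpleGraph V) (k : ℕ) (c : Sym2 V → ℕ) : Prop :=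
  ∀ S : Finset V, S.card = k →
    ∃ T : G.Subgraph, T.Connected ∧ ↑S ⊆ T.verts ∧ Set.InjOn c T.edgeSet

/-- The `k`-rainbow index: minimum number of colors in a `k`-rainbow coloring. -/
noncomputable def rxk {V : Type*} (G : SimpleGraph V) (k : ℕ) : ℕ :=
  sInf {m | ∃ c : Sym2 V → ℕ, (∀ e ∈ G.edgeSet, c e < m) ∧ IsKRainbowColoring G k c}

/-- `D` is a connected `k`-dominating set of `G`. -/
def IsConnKDom {V : Type*} (G : SimpleGraph V) (k : ℕ) (D : Finset V) : Prop :=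
  (G.induce (↑D : Set V)).Connected ∧
    ∀ v : V, v ∉ D → k ≤ ((↑D : Set V) ∩ G.neighborSet v).ncard

/-- The connected `k`-domination number. -/
noncomputable def gammakc {V : Type*} (G : SimpleGraph V) (k : ℕ) : ℕ :=
  sInf {m | ∃ D : Finset V, D.card = m ∧ IsConnKDom G k D}

/-- Ordering lemma: a connected induced subgraph admits an enumeration where every
non-root vertex has a "parent" earlier in the order, adjacent to it. -/
lemma exists_order {n : ℕ} (G : SimpleGraph (Fin n)) (D : Finset (Fin n))
    (hconn : (G.induce (↑D : Set (Fin n))).Connected) :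
    ∃ (ind : Fin n → ℕ) (par : Fin n → Fin n) (x₀ : Fin n),
      x₀ ∈ D ∧ ind x₀ = 0 ∧ Set.InjOn ind ↑D ∧ (∀ x ∈ D, ind x < D.card) ∧
      (∀ x ∈ D, 0 < ind x → par x ∈ D ∧ ind (par x) < ind x ∧ G.Adj x (par x)) := by
  obtain ⟨x₀, hx₀⟩ := hconn.nonempty
  have hx₀D : x₀ ∈ D := by simpa using hx₀
  have key : ∀ t : ℕ, ∃ A : Finset (Fin n), A ⊆ D ∧ x₀ ∈ A ∧ A.card = min (t+1) D.card ∧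
      ∃ ind : Fin n → ℕ, ∃ par : Fin n → Fin n, ind x₀ = 0 ∧ Set.InjOn ind ↑A ∧
        (∀ x ∈ A, ind x < A.card) ∧
        (∀ x ∈ A, 0 < ind x → par x ∈ A ∧ ind (par x) < ind x ∧ G.Adj x (par x)) := by
    intro t
    induction t with
    | zero =>
      refine ⟨{x₀}, by simpa using hx₀D, Finset.mem_singleton_self x₀, ?_,
        fun _ => 0, id, rfl, ?_, ?_, ?_⟩
      · have h1 : 1 ≤ D.card := Finset.card_pos.2 ⟨x₀, hx₀D⟩
        rw [Finset.card_singleton]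
        omega
      · intro a _ b _ _; simp_all
      · intro x hx; simp
      · intro x hx h0; simp at h0
    | succ t ih =>
      obtain ⟨A, hAD, hx₀A, hcard, ind, par, hind0, hinj, hbound, hpar⟩ := ih
      by_cases hfull : A.card = D.card
      · refine ⟨A, hAD, hx₀A, ?_, ind, par, hind0, hinj, hbound, hpar⟩
        omega
      · have hlt : A.card < D.card := lt_of_le_of_ne (Finset.card_le_card hAD) hfull
        have hcardA : A.card = t + 1 := by omega
        -- find w ∈ D \ A
        have : ∃ w, w ∈ D ∧ w ∉ A := by
          by_contra h
          push_neg at h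
          have : D ⊆ A := fun w hw => h w hw
          have := Finset.card_le_card this
          omega
        obtain ⟨w, hwD, hwA⟩ := this
        -- boundary dart in the induced graph
        obtain ⟨p⟩ := hconn.preconnected ⟨x₀, hx₀⟩ ⟨w, by simpa using hwD⟩
        obtain ⟨d, -, hdfst, hdsnd⟩ := p.exists_boundary_dart
          {y : ↥(↑D : Set (Fin n)) | (y : Fin n) ∈ A} hx₀A hwA
        have hadj : G.Adj (d.fst : Fin n) (d.snd : Fin n) := by
          have := d.adj
          simpa [SimpleGraph.comap] using this
        set v : Fin n := (d.snd : Fin n) with hv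
        set a : Fin n := (d.fst : Fin n) with ha
        have hvD : v ∈ D := Finset.mem_coe.1 d.snd.2
        have hvA : v ∉ A := hdsnd
        have haA : a ∈ A := hdfst
        have hne : ∀ ⦃x⦄, x ∈ A → x ≠ v := fun x hx h => hvA (by rwa [h] at hx)
        refine ⟨insert v A, ?_, Finset.mem_insert_of_mem hx₀A, ?_,
          Function.update ind v A.card, Function.update par v a, ?_, ?_, ?_, ?_⟩
        · intro x hx
          rcases Finset.mem_insert.1 hx with rfl | hx
          · exact hvD
          · exact hAD hx
        · rw [Finset.card_insert_of_notMem hvA]; omega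
        · rw [Function.update_of_ne (hne hx₀A) _ _]; exact hind0
        · intro x hx y hy hxy
          simp only [Finset.coe_insert, Set.mem_insert_iff, Finset.mem_coe] at hx hy
          rcases hx with rfl | hx <;> rcases hy with rfl | hy
          · rfl
          · rw [Function.update_self, Function.update_of_ne (hne hy)] at hxy
            exact absurd (hxy ▸ hbound y hy) (lt_irrefl _)
          · rw [Function.update_self, Function.update_of_ne (hne hx)] at hxy
            exact absurd (hxy ▸ hbound x hx) (lt_irrefl _)
          · rw [Function.update_of_ne (hne hx),
              Function.update_of_ne (hne hy)] at hxy
            exact hinj hx hy hxy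
        · intro x hx
          rw [Finset.card_insert_of_notMem hvA]
          rcases Finset.mem_insert.1 hx with rfl | hx
          · rw [Function.update_self]; omega
          · rw [Function.update_of_ne (hne hx)]
            have := hbound x hx; omega
        · intro x hx hpos
          rcases Finset.mem_insert.1 hx with rfl | hx
          · rw [Function.update_self]
            refine ⟨Finset.mem_insert_of_mem haA, ?_, hadj.symm⟩
            rw [Function.update_self, Function.update_of_ne (hne haA)]
            exact hbound a haA
          · rw [Function.update_of_ne (hne hx)] at hpos ⊢
            obtain ⟨h1, h2, h3⟩ := hpar x hx hpos
            refine ⟨Finset.mem_insert_of_mem h1, ?_, h3⟩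
            rw [Function.update_of_ne (hne hx),
              Function.update_of_ne (hne h1)]
            exact h2
  obtain ⟨A, hAD, hx₀A, hcard, ind, par, hind0, hinj, hbound, hpar⟩ := key D.card
  have hAeq : A = D := by
    apply Finset.eq_of_subset_of_card_le hAD
    omega
  subst hAeq
  exact ⟨ind, par, x₀, hx₀A, hind0, hinj, hbound, hpar⟩
noncomputable def attF {n k : ℕ} (γ : ℕ) (N : Fin n → Fin k → Fin n) (w u : Fin n) : ℕ :=
  if h : ∃ i : Fin k, N w i = u then γ - 1 + ((h.choose : Fin k) : ℕ) else 0

noncomputable def colF {n k : ℕ} (D : Finset (Fin n)) (γ : ℕ) (ind : Fin n → ℕ)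
    (N : Fin n → Fin k → Fin n) (u v : Fin n) : ℕ :=
  if u ∈ D then (if v ∈ D then max (ind u) (ind v) - 1 else attF γ N v u)
  else (if v ∈ D then attF γ N u v else 0)

lemma colF_symm {n k : ℕ} (D : Finset (Fin n)) (γ : ℕ) (ind : Fin n → ℕ)
    (N : Fin n → Fin k → Fin n) (u v : Fin n) :
    colF D γ ind N u v = colF D γ ind N v u := by
  unfold colF
  split_ifs <;> simp [Nat.max_comm]

lemma attF_lt {n k : ℕ} (γ : ℕ) (hγ : 1 ≤ γ) (hk : 1 ≤ k) (N : Fin n → Fin k → Fin n)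
    (w u : Fin n) : attF γ N w u < γ + k - 1 := by
  unfold attF
  split
  · next h => have := h.choose.isLt; omega
  · omega
lemma rxk_le_card {n k : ℕ} (hk : 0 < k) (G : SimpleGraph (Fin n)) (D : Finset (Fin n))
    (hD : IsConnKDom G k D) : rxk G k ≤ D.card + k - 1 := by
  classical
  obtain ⟨hDconn, hdom⟩ := hD
  obtain ⟨ind, par, x₀, hx₀D, hind0, hinj, hbound, hpar⟩ := exists_order G D hDconn
  set γ := D.card with hγdef
  have hγ1 : 1 ≤ γ := Finset.card_pos.2 ⟨x₀, hx₀D⟩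
  -- choose, for each vertex outside D, k distinct neighbors inside D
  have hNex : ∀ v : Fin n, ∃ N : Fin k → Fin n, v ∉ D →
      Function.Injective N ∧ ∀ i, N i ∈ D ∧ G.Adj v (N i) := by
    intro v
    by_cases hv : v ∈ D
    · exact ⟨fun _ => v, fun h => absurd hv h⟩
    · have hk' : k ≤ ((↑D : Set (Fin n)) ∩ G.neighborSet v).ncard := hdom v hv
      set s := ((↑D : Set (Fin n)) ∩ G.neighborSet v) with hs
      have hfin : s.Finite := Set.toFinite s
      have hcard : k ≤ hfin.toFinset.card := by
        rwa [Set.ncard_eq_toFinset_card _ hfin] at hk'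
      obtain ⟨t, hts, htc⟩ := Finset.exists_subset_card_eq hcard
      refine ⟨t.orderEmbOfFin htc, fun _ => ⟨(t.orderEmbOfFin htc).injective, fun i => ?_⟩⟩
      have hmem : (t.orderEmbOfFin htc i) ∈ s := by
        have := hts (Finset.orderEmbOfFin_mem t htc i)
        rwa [Set.Finite.mem_toFinset] at this
      exact ⟨Finset.mem_coe.1 hmem.1, hmem.2⟩
  choose N hN using hNex
  set c : Sym2 (Fin n) → ℕ := Sym2.lift ⟨colF D γ ind N, colF_symm D γ ind N⟩ with hcdef
  have hc : ∀ u v : Fin n, c s(u, v) = colF D γ ind N u v := fun u v => rfl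
  -- the coloring uses fewer than γ + k - 1 colors on edges
  have hcbound : ∀ e ∈ G.edgeSet, c e < γ + k - 1 := by
    intro e
    induction e using Sym2.ind with
    | _ u v =>
      intro _
      rw [hc]
      unfold colF
      split_ifs with h1 h2 h3
      · have := hbound u h1; have := hbound v h2; omega
      · exact attF_lt γ hγ1 hk N v u
      · exact attF_lt γ hγ1 hk N u v
      · omega
  -- the coloring is k-rainbow
  have hrain : IsKRainbowColoring G k c := by
    intro S hS
    set P := S \ D with hPdef
    have hPk : P.card ≤ k := by
      rw [← hS]; exact Finset.card_le_card Finset.sdiff_subset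
    have hembP : Nonempty (↥P ↪ Fin k) := by
      apply Function.Embedding.nonempty_of_card_le
      simpa [Fintype.card_coe] using hPk
    obtain ⟨j⟩ := hembP
    set φ : Fin n → Fin k := fun x => if h : x ∈ P then j ⟨x, h⟩ else ⟨0, hk⟩ with hφdef
    have hφinj : ∀ x ∈ P, ∀ y ∈ P, φ x = φ y → x = y := by
      intro x hx y hy hxy
      rw [hφdef] at hxy
      simp only [dif_pos hx, dif_pos hy] at hxy
      exact congrArg Subtype.val (j.injective hxy)
    set A : Fin n → Fin n := fun w => N w (φ w) with hAdef
    have hPnD : ∀ x ∈ P, x ∉ D := fun x hx => (Finset.mem_sdiff.1 hx).2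
    have hPS : ∀ x ∈ P, x ∈ S := fun x hx => (Finset.mem_sdiff.1 hx).1
    have hAD : ∀ x ∈ P, A x ∈ D := fun x hx => ((hN x (hPnD x hx)).2 (φ x)).1
    have hAadj : ∀ x ∈ P, G.Adj x (A x) := fun x hx => ((hN x (hPnD x hx)).2 (φ x)).2
    -- the rainbow tree
    set T : G.Subgraph := {
      verts := ↑D ∪ ↑S
      Adj := fun u v =>
        (u ∈ D ∧ v ∈ D ∧ ((0 < ind u ∧ v = par u) ∨ (0 < ind v ∧ u = par v)))
        ∨ (u ∈ P ∧ v = A u) ∨ (v ∈ P ∧ u = A v)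
      adj_sub := by
        rintro u v (⟨hu, hv, ⟨hpos, rfl⟩ | ⟨hpos, rfl⟩⟩ | ⟨hu, rfl⟩ | ⟨hv, rfl⟩)
        · exact (hpar u hu hpos).2.2
        · exact ((hpar v hv hpos).2.2).symm
        · exact hAadj u hu
        · exact (hAadj v hv).symm
      edge_vert := by
        rintro u v (⟨hu, -⟩ | ⟨hu, rfl⟩ | ⟨hv, rfl⟩)
        · exact Or.inl hu
        · exact Or.inr (hPS u hu)
        · exact Or.inl (Finset.mem_coe.2 (hAD v hv))
      symm := by
        constructor
        rintro u v (⟨hu, hv, h⟩ | h | h)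
        · exact Or.inl ⟨hv, hu, h.symm⟩
        · exact Or.inr (Or.inr h)
        · exact Or.inr (Or.inl h) } with hTdef
    have hTadj : ∀ u v : Fin n, T.Adj u v ↔
        ((u ∈ D ∧ v ∈ D ∧ ((0 < ind u ∧ v = par u) ∨ (0 < ind v ∧ u = par v)))
        ∨ (u ∈ P ∧ v = A u) ∨ (v ∈ P ∧ u = A v)) := fun u v => Iff.rfl
    have hvertD : ∀ u, u ∈ D → u ∈ T.verts := fun u hu => Or.inl (Finset.mem_coe.2 hu)
    have hx₀T : x₀ ∈ T.verts := hvertD x₀ hx₀D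
    -- connectivity
    have hreachD : ∀ t : ℕ, ∀ u, ∀ hu : u ∈ D, ind u ≤ t →
        T.coe.Reachable ⟨u, hvertD u hu⟩ ⟨x₀, hx₀T⟩ := by
      intro t
      induction t with
      | zero =>
        intro u hu h0
        have hux : u = x₀ := hinj (Finset.mem_coe.2 hu) (Finset.mem_coe.2 hx₀D)
          (by rw [hind0]; omega)
        subst hux
        exact Reachable.refl _
      | succ t ih =>
        intro u hu hle
        by_cases h0 : ind u = 0
        · have hux : u = x₀ := hinj (Finset.mem_coe.2 hu) (Finset.mem_coe.2 hx₀D)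
            (by rw [hind0]; omega)
          subst hux
          exact Reachable.refl _
        · obtain ⟨hp1, hp2, -⟩ := hpar u hu (Nat.pos_of_ne_zero h0)
          have hadjT : T.Adj u (par u) :=
            Or.inl ⟨hu, hp1, Or.inl ⟨Nat.pos_of_ne_zero h0, rfl⟩⟩
          have hcoe : T.coe.Adj ⟨u, hvertD u hu⟩ ⟨par u, hvertD _ hp1⟩ := hadjT
          exact hcoe.reachable.trans (ih (par u) hp1 (by omega))
    have hreach : ∀ u, ∀ hu : u ∈ T.verts, T.coe.Reachable ⟨u, hu⟩ ⟨x₀, hx₀T⟩ := by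
      intro u hu
      by_cases huD : u ∈ D
      · exact hreachD (ind u) u huD le_rfl
      · have huS : u ∈ S := by
          rcases hu with h | h
          · exact absurd (Finset.mem_coe.1 h) huD
          · exact Finset.mem_coe.1 h
        have huP : u ∈ P := Finset.mem_sdiff.2 ⟨huS, huD⟩
        have hadjT : T.Adj u (A u) := Or.inr (Or.inl ⟨huP, rfl⟩)
        have hcoe : T.coe.Adj ⟨u, hu⟩ ⟨A u, hvertD _ (hAD u huP)⟩ := hadjT
        exact hcoe.reachable.trans (hreachD (ind (A u)) (A u) (hAD u huP) le_rfl)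
    have hTconn : T.Connected := by
      rw [Subgraph.connected_iff]
      refine ⟨?_, ⟨x₀, hx₀T⟩⟩
      rw [Subgraph.preconnected_iff]
      intro a b
      exact (hreach a.1 a.2).trans (hreach b.1 b.2).symm
    -- color computations
    have hctree : ∀ u, u ∈ D → 0 < ind u → c s(u, par u) = ind u - 1 := by
      intro u hu hpos
      obtain ⟨hpD, hplt, -⟩ := hpar u hu hpos
      rw [hc]
      unfold colF
      rw [if_pos hu, if_pos hpD, Nat.max_eq_left hplt.le]
    have hcatt : ∀ w, w ∈ P → c s(w, A w) = γ - 1 + ((φ w : Fin k) : ℕ) := by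
      intro w hw
      have hwD := hPnD w hw
      have hAD' := hAD w hw
      rw [hc]
      unfold colF
      rw [if_neg hwD, if_pos hAD']
      unfold attF
      have hex : ∃ i : Fin k, N w i = A w := ⟨φ w, rfl⟩
      rw [dif_pos hex]
      have : hex.choose = φ w := (hN w hwD).1 hex.choose_spec
      rw [this]
    -- canonical form of edges of T
    have hmain : ∀ e ∈ T.edgeSet,
        (∃ x, x ∈ D ∧ 0 < ind x ∧ e = s(x, par x)) ∨ (∃ w, w ∈ P ∧ e = s(w, A w)) := by
      intro e
      induction e using Sym2.ind with
      | _ u v =>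
        intro he
        rw [Subgraph.mem_edgeSet] at he
        rcases (hTadj u v).1 he with
          (⟨hu, hv, ⟨hpos, rfl⟩ | ⟨hpos, rfl⟩⟩ | ⟨hu, rfl⟩ | ⟨hv, rfl⟩)
        · exact Or.inl ⟨u, hu, hpos, rfl⟩
        · exact Or.inl ⟨v, hv, hpos, Sym2.eq_swap⟩
        · exact Or.inr ⟨u, hu, rfl⟩
        · exact Or.inr ⟨v, hv, Sym2.eq_swap⟩
    refine ⟨T, hTconn, fun x hx => Or.inr hx, ?_⟩
    intro e₁ he₁ e₂ he₂ hce
    rcases hmain e₁ he₁ with ⟨x, hx, hxp, rfl⟩ | ⟨w, hw, rfl⟩ <;>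
      rcases hmain e₂ he₂ with ⟨y, hy, hyp, rfl⟩ | ⟨w', hw', rfl⟩
    · rw [hctree x hx hxp, hctree y hy hyp] at hce
      have hxy : ind x = ind y := by omega
      rw [hinj (Finset.mem_coe.2 hx) (Finset.mem_coe.2 hy) hxy]
    · rw [hctree x hx hxp, hcatt w' hw'] at hce
      have := hbound x hx
      omega
    · rw [hcatt w hw, hctree y hy hyp] at hce
      have := hbound y hy
      omega
    · rw [hcatt w hw, hcatt w' hw'] at hce
      have hφeq : φ w = φ w' := Fin.ext (by omega)
      rw [hφinj w hw w' hw' hφeq]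
  exact Nat.sInf_le ⟨c, hcbound, hrain⟩

/-- Assuming the Caro–West–Yuster bound `γ_k^c(G) ≤ n (ln δ / δ)(1 + o_δ(1))` for
`k < √(ln δ)`, one gets `rx_k(G) ≤ n (ln δ / δ)(1 + o_δ(1))`. -/
theorem stmt17
    (g : ℕ → ℝ) (hg : Tendsto g atTop (nhds 0))
    (hCWY : ∀ (k δ : ℕ), 0 < k → 0 < δ → (k : ℝ) < Real.sqrt (Real.log δ) →
      ∀ (n : ℕ) (G : SimpleGraph (Fin n)), G.Connected →
      (∀ v, δ ≤ (G.neighborSet v).ncard) →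
      (gammakc G k : ℝ) ≤ n * (Real.log δ / δ) * (1 + g δ)) :
    ∃ f : ℕ → ℝ, Tendsto f atTop (nhds 0) ∧
      ∀ (k δ : ℕ), 0 < k → 0 < δ → (k : ℝ) < Real.sqrt (Real.log δ) →
      ∀ (n : ℕ) (G : SimpleGraph (Fin n)), G.Connected →
      (∀ v, δ ≤ (G.neighborSet v).ncard) →
      (rxk G k : ℝ) ≤ n * (Real.log δ / δ) * (1 + f δ) := by
  refine ⟨fun δ => g δ + (Real.sqrt (Real.log δ))⁻¹, ?_, ?_⟩
  · have hsqrt : Tendsto Real.sqrt atTop atTop := by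
      rw [tendsto_atTop_atTop]
      intro b
      refine ⟨b ^ 2, fun a ha => ?_⟩
      calc b ≤ |b| := le_abs_self b
        _ = Real.sqrt (b ^ 2) := (Real.sqrt_sq_eq_abs b).symm
        _ ≤ Real.sqrt a := Real.sqrt_le_sqrt ha
    have h1 : Tendsto (fun δ : ℕ => (Real.sqrt (Real.log δ))⁻¹) atTop (nhds 0) :=
      tendsto_inv_atTop_zero.comp
        (hsqrt.comp (Real.tendsto_log_atTop.comp tendsto_natCast_atTop_atTop))
    simpa using hg.add h1
  · intro k δ hk hδ hkδ n G hG hmin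
    -- a minimal connected k-dominating set exists
    have hne : {m | ∃ D : Finset (Fin n), D.card = m ∧ IsConnKDom G k D}.Nonempty := by
      refine ⟨(Finset.univ : Finset (Fin n)).card, Finset.univ, rfl, ?_, ?_⟩
      · have huniv : (↑(Finset.univ : Finset (Fin n)) : Set (Fin n)) = Set.univ := by simp
        rw [huniv]
        exact G.induceUnivIso.connected_iff.2 hG
      · intro v hv; simp at hv
    obtain ⟨Dm, hDmcard, hDm⟩ := Nat.sInf_mem hne
    have hrx : rxk G k ≤ gammakc G k + k - 1 := by
      have := rxk_le_card hk G Dm hDm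
      rwa [hDmcard] at this
    have hγle := hCWY k δ hk hδ hkδ n G hG hmin
    set L := Real.log δ with hL
    have hL1 : 1 < L := by
      by_contra h
      push_neg at h
      have h2 : Real.sqrt L ≤ 1 := Real.sqrt_le_one.2 h
      have h3 : (1 : ℝ) ≤ k := by exact_mod_cast hk
      linarith
    have hL0 : (0 : ℝ) < L := by linarith
    have hs0 : 0 < Real.sqrt L := Real.sqrt_pos.2 hL0
    have hδ0 : (0 : ℝ) < δ := by exact_mod_cast hδ
    have hδn : (δ : ℝ) ≤ n := by
      have hnem : Nonempty (Fin n) := hG.nonempty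
      obtain ⟨v⟩ := hnem
      have h1 : δ ≤ (G.neighborSet v).ncard := hmin v
      have h2 : (G.neighborSet v).ncard ≤ n := by
        have := Set.ncard_le_ncard (Set.subset_univ (G.neighborSet v)) Set.finite_univ
        rwa [Set.ncard_univ, Nat.card_eq_fintype_card, Fintype.card_fin] at this
      exact_mod_cast le_trans h1 h2
    have hkey : (k : ℝ) ≤ (n : ℝ) * (L / δ) * (Real.sqrt L)⁻¹ := by
      have h1 : (δ : ℝ) * (L / δ) * (Real.sqrt L)⁻¹ ≤ (n : ℝ) * (L / δ) * (Real.sqrt L)⁻¹ :=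
        mul_le_mul_of_nonneg_right
          (mul_le_mul_of_nonneg_right hδn (by positivity)) (by positivity)
      have h2 : (δ : ℝ) * (L / δ) * (Real.sqrt L)⁻¹ = Real.sqrt L := by
        rw [show (δ : ℝ) * (L / δ) = L by field_simp]
        rw [← div_eq_mul_inv, Real.div_sqrt]
      linarith
    have hcast : (rxk G k : ℝ) ≤ (gammakc G k : ℝ) + (k : ℝ) - 1 := by
      have h1 : (rxk G k : ℝ) ≤ ((gammakc G k + k - 1 : ℕ) : ℝ) := by exact_mod_cast hrx
      have h2 : ((gammakc G k + k - 1 : ℕ) : ℝ) = (gammakc G k : ℝ) + ((k - 1 : ℕ) : ℝ) := by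
        rw [show gammakc G k + k - 1 = gammakc G k + (k - 1) by omega]
        push_cast
        ring
      have h3 : ((k - 1 : ℕ) : ℝ) = (k : ℝ) - 1 := by
        rw [Nat.cast_sub hk]
        norm_num
      rw [h2, h3] at h1
      linarith
    calc (rxk G k : ℝ) ≤ (gammakc G k : ℝ) + ((k : ℝ) - 1) := by linarith
      _ ≤ (n * (L / δ) * (1 + g δ)) + (n * (L / δ) * (Real.sqrt L)⁻¹) := by linarith
      _ = n * (L / δ) * (1 + (g δ + (Real.sqrt L)⁻¹)) := by ring
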